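/- Suppose λ satisfies weak hyperbolicity of type (n₁,n₂). Then for every nonzero z ∈ ℂ, at least one of the deleted cones z·C₁° or z·C₂° lies entirely in the open left half-plane {Re < 0} or entirely in the open right half-plane {Re > 0}. -/

import Mathlib

/-- Linear-algebra core: contradiction from four planar vectors straddling the kernel line of a
nonzero linear functional while all cross products between the two groups are positive. -/
lemma aux_core (p q a₁ b₁ a₂ b₂ a₃ b₃ a₄ b₄ : ℝ)
    (hpq : p ≠ 0 ∨ q ≠ 0)
    (h1 : 0 ≤ p*a₁ - q*b₁) (h2 : p*a₂ - q*b₂ ≤ 0)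
    (h3 : 0 ≤ p*a₃ - q*b₃) (h4 : p*a₄ - q*b₄ ≤ 0)
    (c13 : 0 < a₁*b₃ - b₁*a₃) (c14 : 0 < a₁*b₄ - b₁*a₄)
    (c23 : 0 < a₂*b₃ - b₂*a₃) (c24 : 0 < a₂*b₄ - b₂*a₄) : False := by
  have id3 : (a₂*b₃-b₂*a₃)*(p*a₁-q*b₁) - (a₁*b₃-b₁*a₃)*(p*a₂-q*b₂)
      + (a₁*b₂-b₁*a₂)*(p*a₃-q*b₃) = 0 := by ring
  have id4 : (a₂*b₄-b₂*a₄)*(p*a₁-q*b₁) - (a₁*b₄-b₁*a₄)*(p*a₂-q*b₂)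
      + (a₁*b₂-b₁*a₂)*(p*a₄-q*b₄) = 0 := by ring
  have id2 : -(a₁*b₄-b₁*a₄)*(p*a₃-q*b₃) + (a₁*b₃-b₁*a₃)*(p*a₄-q*b₄)
      + (a₃*b₄-b₃*a₄)*(p*a₁-q*b₁) = 0 := by ring
  have hL1le : p*a₁ - q*b₁ ≤ 0 := by
    rcases le_or_gt 0 (a₁*b₂-b₁*a₂) with hd | hd
    · nlinarith [mul_nonneg hd h3, mul_nonneg c13.le (neg_nonneg.2 h2)]
    · nlinarith [mul_nonneg (neg_nonneg.2 hd.le) (neg_nonneg.2 h4),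
        mul_nonneg c14.le (neg_nonneg.2 h2)]
  have hL1 : p*a₁ - q*b₁ = 0 := le_antisymm hL1le h1
  have h5 : (a₃*b₄-b₃*a₄)*(p*a₁-q*b₁) = 0 := by rw [hL1]; ring
  have hL3le : p*a₃ - q*b₃ ≤ 0 := by
    nlinarith [mul_nonneg c13.le (neg_nonneg.2 h4), h5, id2]
  have hL3 : p*a₃ - q*b₃ = 0 := le_antisymm hL3le h3
  have hp : p * (a₁*b₃ - b₁*a₃) = 0 := by linear_combination b₃ * hL1 - b₁ * hL3
  have hq : q * (a₁*b₃ - b₁*a₃) = 0 := by linear_combination a₃ * hL1 - a₁ * hL3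
  have hp0 : p = 0 := by
    rcases mul_eq_zero.1 hp with h | h
    · exact h
    · exact absurd h c13.ne'
  have hq0 : q = 0 := by
    rcases mul_eq_zero.1 hq with h | h
    · exact h
    · exact absurd h c13.ne'
  rcases hpq with h | h <;> [exact h hp0; exact h hq0]

/-- Cross product of two lambdas from the two blocks is positive. -/
lemma cross_lam_pos {N : ℕ} (n₁ : ℕ) (lam : Fin N → ℂ) (hne : ∀ j, lam j ≠ 0)
    (hwh : ∀ i j : Fin N, (i : ℕ) < n₁ → n₁ ≤ (j : ℕ) →
      0 ≤ (lam i).arg ∧ (lam i).arg < (lam j).arg ∧ (lam j).arg < Real.pi)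
    (i j : Fin N) (hi : (i : ℕ) < n₁) (hj : n₁ ≤ (j : ℕ)) :
    0 < (lam i).re * (lam j).im - (lam i).im * (lam j).re := by
  obtain ⟨h0, hlt, hpi⟩ := hwh i j hi hj
  have hu := hne i
  have hv := hne j
  have hau : 0 < ‖lam i‖ := by
    simpa using (norm_pos_iff.mpr hu)
  have hav : 0 < ‖lam j‖ := by
    simpa using (norm_pos_iff.mpr hv)
  have hreu : (lam i).re = ‖lam i‖ * Real.cos (lam i).arg := by
    rw [Complex.cos_arg hu]; field_simp
  have himu : (lam i).im = ‖lam i‖ * Real.sin (lam i).arg := by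
    rw [Complex.sin_arg]; field_simp
  have hrev : (lam j).re = ‖lam j‖ * Real.cos (lam j).arg := by
    rw [Complex.cos_arg hv]; field_simp
  have himv : (lam j).im = ‖lam j‖ * Real.sin (lam j).arg := by
    rw [Complex.sin_arg]; field_simp
  have hs : 0 < Real.sin ((lam j).arg - (lam i).arg) :=
    Real.sin_pos_of_pos_of_lt_pi (by linarith) (by linarith)
  rw [Real.sin_sub] at hs
  rw [hreu, himu, hrev, himv]
  nlinarith [mul_pos (mul_pos hau hav) hs]

/-- Under weak hyperbolicity of type (n₁,n₂), for every nonzero z ∈ ℂ, at least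
one of the deleted cones z·C₁° or z·C₂° lies entirely in the open left half-plane {Re < 0}
or entirely in the open right half-plane {Re > 0}. -/
theorem deleted_cone_in_halfplane (n₁ n₂ N : ℕ) (hN : N = n₁ + n₂)
    (hn₁ : 1 ≤ n₁) (hn₂ : 1 ≤ n₂)
    (lam : Fin N → ℂ) (hne : ∀ j, lam j ≠ 0)
    (hwh : ∀ i j : Fin N, (i : ℕ) < n₁ → n₁ ≤ (j : ℕ) →
      0 ≤ (lam i).arg ∧ (lam i).arg < (lam j).arg ∧ (lam j).arg < Real.pi)
    (z : ℂ) (hz : z ≠ 0) :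
    (∀ w : ℂ, w ≠ 0 →
      (∃ r : Fin N → ℝ, (∀ j, 0 ≤ r j) ∧
        w = ∑ j ∈ Finset.univ.filter (fun j : Fin N => (j : ℕ) < n₁), (r j : ℂ) * lam j) →
      (z * w).re < 0) ∨
    (∀ w : ℂ, w ≠ 0 →
      (∃ r : Fin N → ℝ, (∀ j, 0 ≤ r j) ∧
        w = ∑ j ∈ Finset.univ.filter (fun j : Fin N => (j : ℕ) < n₁), (r j : ℂ) * lam j) →
      0 < (z * w).re) ∨
    (∀ w : ℂ, w ≠ 0 →
      (∃ s : Fin N → ℝ, (∀ j, 0 ≤ s j) ∧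
        w = ∑ j ∈ Finset.univ.filter (fun j : Fin N => n₁ ≤ (j : ℕ)), (s j : ℂ) * lam j) →
      (z * w).re < 0) ∨
    (∀ w : ℂ, w ≠ 0 →
      (∃ s : Fin N → ℝ, (∀ j, 0 ≤ s j) ∧
        w = ∑ j ∈ Finset.univ.filter (fun j : Fin N => n₁ ≤ (j : ℕ)), (s j : ℂ) * lam j) →
      0 < (z * w).re) := by
  by_contra hcon
  push_neg at hcon
  obtain ⟨⟨w₁, hw₁ne, hw₁rep, hw₁⟩, ⟨w₂, hw₂ne, hw₂rep, hw₂⟩,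
    ⟨w₃, hw₃ne, hw₃rep, hw₃⟩, ⟨w₄, hw₄ne, hw₄rep, hw₄⟩⟩ := hcon
  -- cross-product positivity between cones
  have cross_sum : ∀ x y : ℂ, x ≠ 0 → y ≠ 0 →
      (∃ r : Fin N → ℝ, (∀ j, 0 ≤ r j) ∧
        x = ∑ j ∈ Finset.univ.filter (fun j : Fin N => (j : ℕ) < n₁), (r j : ℂ) * lam j) →
      (∃ s : Fin N → ℝ, (∀ j, 0 ≤ s j) ∧
        y = ∑ j ∈ Finset.univ.filter (fun j : Fin N => n₁ ≤ (j : ℕ)), (s j : ℂ) * lam j) →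
      0 < x.re * y.im - x.im * y.re := by
    rintro x y hx hy ⟨r, hr, rfl⟩ ⟨s, hs, rfl⟩
    have clp : ∀ i j : Fin N, (i : ℕ) < n₁ → n₁ ≤ (j : ℕ) →
        0 < (lam i).re * (lam j).im - (lam i).im * (lam j).re :=
      fun i j hi hj => cross_lam_pos n₁ lam hne hwh i j hi hj
    set S₁ := Finset.univ.filter (fun j : Fin N => (j : ℕ) < n₁) with hS₁
    set S₂ := Finset.univ.filter (fun j : Fin N => n₁ ≤ (j : ℕ)) with hS₂
    have hre1 : (∑ j ∈ S₁, (r j : ℂ) * lam j).re = ∑ j ∈ S₁, r j * (lam j).re := by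
      rw [Complex.re_sum]
      exact Finset.sum_congr rfl fun j _ => by simp [Complex.mul_re]
    have him1 : (∑ j ∈ S₁, (r j : ℂ) * lam j).im = ∑ j ∈ S₁, r j * (lam j).im := by
      rw [Complex.im_sum]
      exact Finset.sum_congr rfl fun j _ => by simp [Complex.mul_im]
    have hre2 : (∑ j ∈ S₂, (s j : ℂ) * lam j).re = ∑ j ∈ S₂, s j * (lam j).re := by
      rw [Complex.re_sum]
      exact Finset.sum_congr rfl fun j _ => by simp [Complex.mul_re]
    have him2 : (∑ j ∈ S₂, (s j : ℂ) * lam j).im = ∑ j ∈ S₂, s j * (lam j).im := by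
      rw [Complex.im_sum]
      exact Finset.sum_congr rfl fun j _ => by simp [Complex.mul_im]
    rw [hre1, him1, hre2, him2]
    have key : (∑ i ∈ S₁, r i * (lam i).re) * (∑ j ∈ S₂, s j * (lam j).im)
        - (∑ i ∈ S₁, r i * (lam i).im) * (∑ j ∈ S₂, s j * (lam j).re)
        = ∑ i ∈ S₁, ∑ j ∈ S₂,
            (r i * s j) * ((lam i).re * (lam j).im - (lam i).im * (lam j).re) := by
      rw [Finset.sum_mul_sum, Finset.sum_mul_sum, ← Finset.sum_sub_distrib]
      refine Finset.sum_congr rfl fun i _ => ?_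
      rw [← Finset.sum_sub_distrib]
      exact Finset.sum_congr rfl fun j _ => by ring
    rw [key]
    have hmem₁ : ∀ i ∈ S₁, (i : ℕ) < n₁ := fun i hi => (Finset.mem_filter.1 hi).2
    have hmem₂ : ∀ j ∈ S₂, n₁ ≤ (j : ℕ) := fun j hj => (Finset.mem_filter.1 hj).2
    have hi₀ : ∃ i ∈ S₁, r i ≠ 0 := by
      by_contra h
      push_neg at h
      exact hx (Finset.sum_eq_zero fun i hi => by rw [h i hi]; simp)
    have hj₀ : ∃ j ∈ S₂, s j ≠ 0 := by
      by_contra h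
      push_neg at h
      exact hy (Finset.sum_eq_zero fun j hj => by rw [h j hj]; simp)
    obtain ⟨i₀, hi₀S, hi₀ne⟩ := hi₀
    obtain ⟨j₀, hj₀S, hj₀ne⟩ := hj₀
    refine Finset.sum_pos' (fun i hi => Finset.sum_nonneg fun j hj =>
      mul_nonneg (mul_nonneg (hr i) (hs j))
        (clp i j (hmem₁ i hi) (hmem₂ j hj)).le) ⟨i₀, hi₀S, ?_⟩
    refine Finset.sum_pos' (fun j hj =>
      mul_nonneg (mul_nonneg (hr i₀) (hs j))
        (clp i₀ j (hmem₁ i₀ hi₀S) (hmem₂ j hj)).le) ⟨j₀, hj₀S, ?_⟩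
    exact mul_pos (mul_pos (lt_of_le_of_ne (hr i₀) (Ne.symm hi₀ne))
      (lt_of_le_of_ne (hs j₀) (Ne.symm hj₀ne)))
      (clp i₀ j₀ (hmem₁ i₀ hi₀S) (hmem₂ j₀ hj₀S))
  have c13 := cross_sum w₁ w₃ hw₁ne hw₃ne hw₁rep hw₃rep
  have c14 := cross_sum w₁ w₄ hw₁ne hw₄ne hw₁rep hw₄rep
  have c23 := cross_sum w₂ w₃ hw₂ne hw₃ne hw₂rep hw₃rep
  have c24 := cross_sum w₂ w₄ hw₂ne hw₄ne hw₂rep hw₄rep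
  have hpq : z.re ≠ 0 ∨ z.im ≠ 0 := by
    by_contra h
    push_neg at h
    exact hz (Complex.ext h.1 h.2)
  refine aux_core z.re z.im w₁.re w₁.im w₂.re w₂.im w₃.re w₃.im w₄.re w₄.im hpq ?_ ?_ ?_ ?_ c13 c14 c23 c24
  · rw [← Complex.mul_re]; exact hw₁
  · rw [← Complex.mul_re]; exact hw₂
  · rw [← Complex.mul_re]; exact hw₃
  · rw [← Complex.mul_re]; exact hw₄
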